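/- Let γ, κ, λ > 0 with min(γ, κ)/λ ≥ 1. Then q₀(λ, γ, κ) ≥ 1/(2(e − 1)), and in particular q₀(λ, γ, κ) > 1/6; hence an abandonment probability of at most η ≤ 1/6 in the balanced two-sided FIFO queue is impossible when the arrival rate λ is at most min(γ, κ). -/

import Mathlib

noncomputable def partialProd (n : ℕ) (c : ℝ) : ℝ :=
  ∏ j ∈ Finset.Icc 1 n, (1 + (j : ℝ) * c)⁻¹

noncomputable def q0 (lam gam kap : ℝ) : ℝ :=
  (1 + ∑' n : ℕ, (partialProd (n + 1) (gam / lam) + partialProd (n + 1) (kap / lam)))⁻¹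

lemma prodIcc (n : ℕ) : ∏ j ∈ Finset.Icc 1 n, ((j : ℝ) + 1) = (n + 1).factorial := by
  induction n with
  | zero => simp
  | succ n ih =>
    rw [Finset.prod_Icc_succ_top (by omega), ih]
    have : (n + 1 + 1).factorial = (n + 2) * (n + 1).factorial := rfl
    rw [this]; push_cast; ring

lemma pp_pos {c : ℝ} (hc : 0 < c) (n : ℕ) : 0 < partialProd n c := by
  apply Finset.prod_pos
  intro j hj
  have : (0:ℝ) ≤ (j:ℝ) * c := by positivity
  positivity

lemma pp_le {c : ℝ} (hc : 1 ≤ c) (n : ℕ) :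
    partialProd n c ≤ ((n + 1).factorial : ℝ)⁻¹ := by
  have h : partialProd n c ≤ ∏ j ∈ Finset.Icc 1 n, ((j : ℝ) + 1)⁻¹ := by
    apply Finset.prod_le_prod
    · intro j hj
      have : (0:ℝ) ≤ (j:ℝ) * c := by positivity
      positivity
    · intro j hj
      have hj1 : 1 ≤ j := (Finset.mem_Icc.1 hj).1
      apply inv_anti₀
      · positivity
      · have : (j:ℝ) ≤ (j:ℝ) * c := le_mul_of_one_le_right (by positivity) hc
        linarith
  rw [Finset.prod_inv_distrib, prodIcc] at h
  exact h

lemma fact_inv_summable : Summable (fun n : ℕ => ((n).factorial : ℝ)⁻¹) := by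
  simpa [one_div] using Real.summable_pow_div_factorial 1

lemma pp_summable {c : ℝ} (hc : 1 ≤ c) :
    Summable (fun n : ℕ => partialProd (n + 1) c) := by
  have hs : Summable (fun n : ℕ => ((n + 2).factorial : ℝ)⁻¹) :=
    (summable_nat_add_iff 2).2 fact_inv_summable
  apply hs.of_nonneg_of_le
  · intro n; exact (pp_pos (by linarith) _).le
  · intro n; simpa using pp_le hc (n + 1)

lemma exp_eq : Real.exp 1 = ∑' n : ℕ, ((n).factorial : ℝ)⁻¹ := by
  rw [Real.exp_eq_exp_ℝ, NormedSpace.exp_eq_tsum ℝ]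
  simp [smul_eq_mul]

lemma tsum_fact_shift : ∑' n : ℕ, ((n + 2).factorial : ℝ)⁻¹ = Real.exp 1 - 2 := by
  have h := Summable.sum_add_tsum_nat_add 2 fact_inv_summable
  rw [exp_eq]
  have : ∑ i ∈ Finset.range 2, ((i).factorial : ℝ)⁻¹ = 2 := by
    simp [Finset.sum_range_succ]; norm_num
  linarith [h]

/-- if `min(γ,κ)/λ ≥ 1`, then `q₀(λ, γ, κ) ≥ 1/(2(e − 1))`,
and in particular `q₀(λ, γ, κ) > 1/6`; hence abandonment probability at most
`η ≤ 1/6` is impossible when `λ ≤ min(γ, κ)`. -/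
theorem statement13 (lam gam kap : ℝ) (hlam : 0 < lam) (hgam : 0 < gam) (hkap : 0 < kap)
    (hc : 1 ≤ min gam kap / lam) :
    1 / (2 * (Real.exp 1 - 1)) ≤ q0 lam gam kap ∧ 1 / 6 < q0 lam gam kap := by
  have hc1 : 1 ≤ gam / lam := le_trans hc (by gcongr; exact min_le_left _ _)
  have hc2 : 1 ≤ kap / lam := le_trans hc (by gcongr; exact min_le_right _ _)
  have hs1 := pp_summable hc1
  have hs2 := pp_summable hc2
  have hsf : Summable (fun n : ℕ => ((n + 2).factorial : ℝ)⁻¹) :=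
    (summable_nat_add_iff 2).2 fact_inv_summable
  set D := 1 + ∑' n : ℕ, (partialProd (n + 1) (gam / lam) + partialProd (n + 1) (kap / lam))
    with hD
  have htpos : 0 ≤ ∑' n : ℕ, (partialProd (n + 1) (gam / lam) + partialProd (n + 1) (kap / lam)) :=
    tsum_nonneg fun n => by
      have := pp_pos (show (0:ℝ) < gam/lam by linarith) (n+1)
      have := pp_pos (show (0:ℝ) < kap/lam by linarith) (n+1)
      linarith
  have hDpos : 0 < D := by rw [hD]; linarith
  have hbound : D ≤ 2 * (Real.exp 1 - 1) := by
    have hle : ∑' n : ℕ, (partialProd (n + 1) (gam / lam) + partialProd (n + 1) (kap / lam))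
        ≤ ∑' n : ℕ, 2 * ((n + 2).factorial : ℝ)⁻¹ := by
      apply Summable.tsum_le_tsum _ (hs1.add hs2) (hsf.mul_left 2)
      intro n
      have h1 := pp_le hc1 (n + 1)
      have h2 := pp_le hc2 (n + 1)
      simp only [Nat.add_assoc] at h1 h2 ⊢
      norm_num at h1 h2 ⊢
      linarith
    have : ∑' n : ℕ, 2 * ((n + 2).factorial : ℝ)⁻¹ = 2 * (Real.exp 1 - 2) := by
      rw [tsum_mul_left, tsum_fact_shift]
    rw [this] at hle
    rw [hD]; linarith
  have hq : q0 lam gam kap = D⁻¹ := rfl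
  have he1 : 1 < Real.exp 1 := by
    have := Real.exp_one_gt_d9; linarith
  have hmain : 1 / (2 * (Real.exp 1 - 1)) ≤ q0 lam gam kap := by
    rw [hq, one_div]
    exact inv_anti₀ hDpos hbound
  refine ⟨hmain, lt_of_lt_of_le ?_ hmain⟩
  have he2 : Real.exp 1 < 2.7182818286 := Real.exp_one_lt_d9
  rw [div_lt_div_iff₀ (by norm_num) (by linarith)]
  linarith
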